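/- Suppose F is continuous and 0 < F(y) < 1 for all y ∈ (0,1). Let α ∈ (0,1), x ∈ (0,1), and assume n ≥ l_α² / (F(x)(1−F(x))). Let m > 1 be an integer such that |B_m(σ²(F);x) − F(x)(1−F(x))| ≤ F(x)(1−F(x))/l_α² and |B_m(F;x) − F(x)| ≤ √(F(x)(1−F(x)))·l_α/√n, where B_m(σ²(F);x) = Σ_{k=0}^m F(k/m)(1−F(k/m)) p_{m,k}(x). Then P( |B_m(Y_n;x) − F(x)| ≥ (2l_α + 1/l_α)·√(F(x)(1−F(x)))/√n ) ≤ α. -/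

import Mathlib

open Set Finset MeasureTheory ProbabilityTheory

set_option maxHeartbeats 4000000


lemma exp_le_quad {s : ℝ} (hs : |s| ≤ 1) : Real.exp s ≤ 1 + s + (3/4) * s^2 := by
  have h := Real.exp_bound hs (n := 2) (by norm_num)
  have h2 : ∑ m ∈ range 2, s ^ m / m.factorial = 1 + s := by
    simp [Finset.sum_range_succ]
  rw [h2] at h
  have h3 : |s| ^ 2 * ((Nat.succ 2 : ℝ) / ((Nat.factorial 2 : ℝ) * (2:ℕ))) = (3/4) * s^2 := by
    rw [sq_abs]; norm_num [Nat.factorial]; ring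
  rw [h3] at h
  linarith [abs_le.mp h]

lemma integrable_of_bdd {Ω : Type*} [MeasurableSpace Ω] {P : Measure Ω} [IsProbabilityMeasure P]
    {f : Ω → ℝ} (hf : Measurable f) (C : ℝ) (hC : ∀ ω, |f ω| ≤ C) : Integrable f P :=
  ⟨hf.aestronglyMeasurable, HasFiniteIntegral.of_bounded (C := C)
    (ae_of_all _ fun ω => by simpa [Real.norm_eq_abs] using hC ω)⟩

/-- Per-variable mgf bound: if `Y ∈ [0,1]` with mean `μ0` and second central moment `≤ v`,
then for `0 < t ≤ 1`, `mgf Y t ≤ exp (t μ0 + (3/4) t² v)`. -/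
lemma mgf_le_of_bdd {Ω : Type*} [MeasurableSpace Ω] (P : Measure Ω) [IsProbabilityMeasure P]
    {Y : Ω → ℝ} (hmeas : Measurable Y) (hbd : ∀ ω, Y ω ∈ Set.Icc (0:ℝ) 1)
    {μ0 v t : ℝ} (hμ : ∫ ω, Y ω ∂P = μ0) (hv : ∫ ω, (Y ω - μ0)^2 ∂P ≤ v)
    (ht0 : 0 ≤ t) (ht1 : t ≤ 1) :
    mgf Y P t ≤ Real.exp (t * μ0 + (3/4) * t^2 * v) := by
  have hYint : Integrable Y P := integrable_of_bdd hmeas 1 (fun ω => by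
    have := hbd ω; rw [abs_le]; constructor <;> [linarith [this.1]; exact this.2])
  have hμ01 : μ0 ∈ Set.Icc (0:ℝ) 1 := by
    constructor
    · rw [← hμ]; exact integral_nonneg (fun ω => (hbd ω).1)
    · rw [← hμ]
      calc ∫ ω, Y ω ∂P ≤ ∫ _, (1:ℝ) ∂P := integral_mono hYint (integrable_const 1)
            (fun ω => (hbd ω).2)
        _ = 1 := by simp
  have habs : ∀ ω, |t * (Y ω - μ0)| ≤ 1 := by
    intro ω
    rw [abs_mul]
    have h1 : |Y ω - μ0| ≤ 1 := by
      rw [abs_le]; constructor <;> [linarith [(hbd ω).1, hμ01.2]; linarith [(hbd ω).2, hμ01.1]]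
    have h2 : |t| ≤ 1 := by rwa [abs_of_nonneg ht0]
    calc |t| * |Y ω - μ0| ≤ 1 * 1 := by
          exact mul_le_mul h2 h1 (abs_nonneg _) zero_le_one
      _ = 1 := by ring
  have hd : ∀ ω, -1 ≤ Y ω - μ0 ∧ Y ω - μ0 ≤ 1 := fun ω =>
    ⟨by linarith [(hbd ω).1, hμ01.2], by linarith [(hbd ω).2, hμ01.1]⟩
  have hsqint : Integrable (fun ω => (Y ω - μ0)^2) P :=
    integrable_of_bdd (by measurability) 1 (fun ω => by
      rw [abs_of_nonneg (sq_nonneg _)]; nlinarith [(hd ω).1, (hd ω).2])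
  have hlin : Integrable (fun ω => t * (Y ω - μ0)) P :=
    integrable_of_bdd (by measurability) 1 (fun ω => habs ω)
  have hlin1 : Integrable (fun ω => 1 + t * (Y ω - μ0)) P :=
    integrable_of_bdd (by measurability) 2 (fun ω => by
      have := abs_le.mp (habs ω); rw [abs_le]; constructor <;> linarith)
  have hsq2 : Integrable (fun ω => (3/4) * (t * (Y ω - μ0))^2) P :=
    integrable_of_bdd (by measurability) 1 (fun ω => by
      have := abs_le.mp (habs ω)
      rw [abs_of_nonneg (by positivity)]; nlinarith)
  have hpt : ∀ ω, Real.exp (t * Y ω) ≤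
      Real.exp (t * μ0) * (1 + t * (Y ω - μ0) + (3/4) * (t * (Y ω - μ0))^2) := by
    intro ω
    have : Real.exp (t * Y ω) = Real.exp (t * μ0) * Real.exp (t * (Y ω - μ0)) := by
      rw [← Real.exp_add]; ring_nf
    rw [this]
    exact mul_le_mul_of_nonneg_left (exp_le_quad (habs ω)) (Real.exp_pos _).le
  have hexpint : Integrable (fun ω => Real.exp (t * Y ω)) P :=
    integrable_of_bdd (by measurability) (Real.exp 1) (fun ω => by
      rw [abs_of_nonneg (Real.exp_pos _).le]
      apply Real.exp_le_exp.mpr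
      have := (hbd ω); nlinarith [this.1, this.2])
  have hrhs : Integrable (fun ω => Real.exp (t * μ0) *
      (1 + t * (Y ω - μ0) + (3/4) * (t * (Y ω - μ0))^2)) P :=
    ((hlin1.add hsq2).const_mul _)
  have hc : ∫ ω, (3/4) * (t * (Y ω - μ0))^2 ∂P = (3/4) * t^2 * ∫ ω, (Y ω - μ0)^2 ∂P := by
    rw [← integral_const_mul]; congr 1; funext ω; ring
  calc mgf Y P t = ∫ ω, Real.exp (t * Y ω) ∂P := rfl
    _ ≤ ∫ ω, Real.exp (t * μ0) * (1 + t * (Y ω - μ0) + (3/4) * (t * (Y ω - μ0))^2) ∂P :=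
        integral_mono hexpint hrhs hpt
    _ = Real.exp (t * μ0) * (1 + (3/4) * t^2 * (∫ ω, (Y ω - μ0)^2 ∂P)) := by
        rw [integral_const_mul]
        congr 1
        rw [integral_add hlin1 hsq2, integral_add (integrable_const 1) hlin,
          integral_const_mul, integral_sub hYint (integrable_const μ0), hc]
        simp [hμ]
    _ ≤ Real.exp (t * μ0) * Real.exp ((3/4) * t^2 * v) := by
        apply mul_le_mul_of_nonneg_left _ (Real.exp_pos _).le
        have h1 : 1 + (3/4) * t^2 * (∫ ω, (Y ω - μ0)^2 ∂P)
            ≤ 1 + (3/4) * t^2 * v := by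
          have : (3/4) * t^2 * (∫ ω, (Y ω - μ0)^2 ∂P) ≤ (3/4) * t^2 * v :=
            mul_le_mul_of_nonneg_left hv (by positivity)
          linarith
        exact h1.trans (by linarith [Real.add_one_le_exp ((3/4) * t^2 * v)])
    _ = Real.exp (t * μ0 + (3/4) * t^2 * v) := (Real.exp_add _ _).symm

lemma chernoff_tail {Ω : Type*} [MeasurableSpace Ω] (P : Measure Ω) [IsProbabilityMeasure P]
    (n : ℕ) (Y : Fin n → Ω → ℝ) (hmeas : ∀ r, Measurable (Y r))
    (hindep : iIndepFun Y P)
    (hbd : ∀ r ω, Y r ω ∈ Set.Icc (0:ℝ) 1)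
    (μ0 v t ε : ℝ) (hμ : ∀ r, ∫ ω, Y r ω ∂P = μ0)
    (hv : ∀ r, ∫ ω, (Y r ω - μ0)^2 ∂P ≤ v)
    (ht0 : 0 ≤ t) (ht1 : t ≤ 1) :
    P {ω | (n:ℝ) * (μ0 + ε) ≤ ∑ r, Y r ω} ≤
      ENNReal.ofReal (Real.exp ((n:ℝ) * ((3/4) * t^2 * v - t * ε))) := by
  have hint : ∀ i ∈ Finset.univ, Integrable (fun ω => Real.exp (t * Y i ω)) P := by
    intro i _
    refine integrable_of_bdd (by measurability) (Real.exp 1) (fun ω => ?_)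
    rw [abs_of_nonneg (Real.exp_pos _).le]
    apply Real.exp_le_exp.mpr
    nlinarith [(hbd i ω).1, (hbd i ω).2]
  have hsum_int := hindep.integrable_exp_mul_sum hmeas hint
  have hset : {ω | (n:ℝ) * (μ0 + ε) ≤ ∑ r, Y r ω} =
      {ω | (n:ℝ) * (μ0 + ε) ≤ (∑ r, Y r) ω} := by
    ext ω; simp [Finset.sum_apply]
  have hch := measure_ge_le_exp_mul_mgf (X := ∑ i, Y i) (μ := P) ((n:ℝ) * (μ0 + ε)) ht0 hsum_int
  have hmgf := hindep.mgf_sum (t := t) hmeas Finset.univ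
  have hprod : ∏ i, mgf (Y i) P t ≤ (Real.exp (t * μ0 + (3/4) * t^2 * v))^n := by
    calc ∏ i, mgf (Y i) P t ≤ ∏ _i : Fin n, Real.exp (t * μ0 + (3/4) * t^2 * v) :=
          Finset.prod_le_prod (fun i _ => mgf_nonneg)
            (fun i _ => mgf_le_of_bdd P (hmeas i) (hbd i) (hμ i) (hv i) ht0 ht1)
      _ = _ := by simp [Finset.prod_const, Finset.card_univ]
  have hfinal : (P {ω | (n:ℝ) * (μ0 + ε) ≤ ∑ r, Y r ω}).toReal ≤
      Real.exp ((n:ℝ) * ((3/4) * t^2 * v - t * ε)) := by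
    rw [hset]
    refine hch.trans ?_
    rw [hmgf]
    calc Real.exp (-t * ((n:ℝ) * (μ0 + ε))) * ∏ i, mgf (Y i) P t
        ≤ Real.exp (-t * ((n:ℝ) * (μ0 + ε))) * (Real.exp (t * μ0 + (3/4) * t^2 * v))^n :=
          mul_le_mul_of_nonneg_left hprod (Real.exp_pos _).le
      _ = Real.exp ((n:ℝ) * ((3/4) * t^2 * v - t * ε)) := by
          rw [← Real.exp_nat_mul, ← Real.exp_add]
          congr 1
          ring
  calc P {ω | (n:ℝ) * (μ0 + ε) ≤ ∑ r, Y r ω}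
      = ENNReal.ofReal (P {ω | (n:ℝ) * (μ0 + ε) ≤ ∑ r, Y r ω}).toReal :=
        (ENNReal.ofReal_toReal (measure_ne_top P _)).symm
    _ ≤ _ := ENNReal.ofReal_le_ofReal hfinal

/-- Bernstein basis polynomial `p_{m,k}(x) = C(m,k) x^k (1-x)^{m-k}`. -/
noncomputable def bern (m k : ℕ) (x : ℝ) : ℝ :=
  (m.choose k : ℝ) * x ^ k * (1 - x) ^ (m - k)

/-- The `m`-th Bernstein polynomial of `f`. -/
noncomputable def Bpoly (m : ℕ) (f : ℝ → ℝ) (x : ℝ) : ℝ :=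
  ∑ k ∈ Finset.range (m + 1), f ((k : ℝ) / m) * bern m k x

/-- Empirical distribution function `Y_n(x) = (1/n) Σ_r 1{X_r ≤ x}`. -/
noncomputable def empY {Ω : Type*} (n : ℕ) (X : Fin n → Ω → ℝ) (x : ℝ) (ω : Ω) : ℝ :=
  (1 / n : ℝ) * ∑ r, (if X r ω ≤ x then (1 : ℝ) else 0)

/-- Random Bernstein polynomial `B_m(Y_n;x)`, as a function of `x` for each `ω`. -/
noncomputable def BY {Ω : Type*} (m n : ℕ) (X : Fin n → Ω → ℝ) (ω : Ω) (x : ℝ) : ℝ :=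
  ∑ k ∈ Finset.range (m + 1), empY n X ((k : ℝ) / m) ω * bern m k x

/-- `l_α = √(3 log(2 e^{1/3} / α))`. -/
noncomputable def lAlpha (α : ℝ) : ℝ :=
  Real.sqrt (3 * Real.log (2 * Real.exp (1 / 3) / α))

theorem confidence_interval_for_F
    {Ω : Type*} [MeasurableSpace Ω] (P : Measure Ω) [IsProbabilityMeasure P]
    (n : ℕ) (hn : 2 ≤ n) (X : Fin n → Ω → ℝ)
    (hmeas : ∀ r, Measurable (X r))
    (hindep : iIndepFun X P)
    (hval : ∀ r ω, X r ω ∈ Set.Icc (0:ℝ) 1)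
    (F : ℝ → ℝ) (hFcont : Continuous F)
    (hcdf : ∀ r y, (P {ω | X r ω ≤ y}).toReal = F y)
    (hFpos : ∀ y ∈ Set.Ioo (0:ℝ) 1, 0 < F y ∧ F y < 1)
    (α : ℝ) (hα : α ∈ Set.Ioo (0:ℝ) 1)
    (x : ℝ) (hx : x ∈ Set.Ioo (0:ℝ) 1)
    (hnbig : (lAlpha α) ^ 2 / (F x * (1 - F x)) ≤ n)
    (m : ℕ) (hm : 1 < m)
    (hvar : |Bpoly m (fun y => F y * (1 - F y)) x - F x * (1 - F x)| ≤
      F x * (1 - F x) / (lAlpha α) ^ 2)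
    (hbias : |Bpoly m F x - F x| ≤
      Real.sqrt (F x * (1 - F x)) * lAlpha α / Real.sqrt n) :
    P {ω | |BY m n X ω x - F x| ≥
        (2 * lAlpha α + 1 / lAlpha α) * Real.sqrt (F x * (1 - F x)) / Real.sqrt n} ≤
      ENNReal.ofReal α := by
  obtain ⟨hα0, hα1⟩ := hα
  obtain ⟨hFx0, hFx1⟩ := hFpos x hx
  set σ2 : ℝ := F x * (1 - F x) with hσ2def
  have hσ2 : 0 < σ2 := mul_pos hFx0 (by linarith)
  set l : ℝ := lAlpha α with hldef
  set L : ℝ := Real.log (2 / α) with hLdef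
  have hL : 0 < L := Real.log_pos (by rw [lt_div_iff₀ hα0]; linarith)
  have hlog : 3 * Real.log (2 * Real.exp (1/3) / α) = 3 * L + 1 := by
    rw [hLdef, Real.log_div (by positivity) (ne_of_gt hα0),
      Real.log_div (by positivity) (ne_of_gt hα0),
      Real.log_mul (by norm_num) (Real.exp_pos _).ne', Real.log_exp]
    ring
  have hl2 : l ^ 2 = 3 * L + 1 := by
    rw [hldef, lAlpha, Real.sq_sqrt (by rw [hlog]; positivity)]
    exact hlog
  have hl : 0 < l := by
    rw [hldef, lAlpha]
    exact Real.sqrt_pos.mpr (by rw [hlog]; positivity)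
  -- the function g and Z
  set g : ℝ → ℝ := fun y => ∑ k ∈ Finset.range (m + 1),
    (if y ≤ (k : ℝ) / m then (1:ℝ) else 0) * bern m k x with hgdef
  have hbern_nonneg : ∀ k, 0 ≤ bern m k x := by
    intro k
    have h1 : (0:ℝ) ≤ x := hx.1.le
    have h2 : (0:ℝ) ≤ 1 - x := by linarith [hx.2]
    unfold bern; positivity
  have hbern_sum : ∑ k ∈ Finset.range (m + 1), bern m k x = 1 := by
    have h := add_pow x (1 - x) m
    have h2 : x + (1 - x) = 1 := by ring
    rw [h2, one_pow] at h
    calc ∑ k ∈ Finset.range (m + 1), bern m k x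
        = ∑ k ∈ Finset.range (m + 1), x ^ k * (1-x) ^ (m - k) * (m.choose k : ℝ) := by
          apply Finset.sum_congr rfl
          intro k _
          unfold bern
          ring
      _ = 1 := h.symm
  have hgmeas : Measurable g := by
    apply Finset.measurable_sum
    intro k _
    exact (Measurable.ite measurableSet_Iic measurable_const measurable_const).mul
      measurable_const
  have hgbd : ∀ y, g y ∈ Set.Icc (0:ℝ) 1 := by
    intro y
    constructor
    · apply Finset.sum_nonneg
      intro k _
      have := hbern_nonneg k
      split <;> simp [this]
    · calc g y ≤ ∑ k ∈ Finset.range (m + 1), bern m k x := by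
            apply Finset.sum_le_sum
            intro k _
            have := hbern_nonneg k
            split <;> simp [this]
        _ = 1 := hbern_sum
  set Z : Fin n → Ω → ℝ := fun r ω => g (X r ω) with hZdef
  have hZmeas : ∀ r, Measurable (Z r) := fun r => hgmeas.comp (hmeas r)
  have hZindep : iIndepFun Z P :=
    hindep.comp (fun _ => g) (fun _ => hgmeas)
  have hZbd : ∀ r ω, Z r ω ∈ Set.Icc (0:ℝ) 1 := fun r ω => hgbd _
  -- means of indicators
  have hind_int : ∀ r (c : ℝ), ∫ ω, (if X r ω ≤ c then (1:ℝ) else 0) ∂P = F c := by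
    intro r c
    have hs : MeasurableSet {ω | X r ω ≤ c} := (hmeas r) measurableSet_Iic
    have : (fun ω => if X r ω ≤ c then (1:ℝ) else 0) =
        Set.indicator {ω | X r ω ≤ c} (1 : Ω → ℝ) := by
      funext ω
      rw [Set.indicator_apply]
      rfl
    rw [this, integral_indicator_one hs]
    exact hcdf r c
  have hind_integrable : ∀ r (c : ℝ),
      Integrable (fun ω => if X r ω ≤ c then (1:ℝ) else 0) P := by
    intro r c
    refine integrable_of_bdd ?_ 1 (fun ω => by split <;> norm_num)
    exact (measurable_const.ite ((hmeas r) measurableSet_Iic) measurable_const)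
  set μZ : ℝ := Bpoly m F x with hμZdef
  have hmean : ∀ r, ∫ ω, Z r ω ∂P = μZ := by
    intro r
    have : ∫ ω, Z r ω ∂P = ∑ k ∈ Finset.range (m + 1),
        ∫ ω, (if X r ω ≤ (k:ℝ)/m then (1:ℝ) else 0) * bern m k x ∂P := by
      rw [← integral_finset_sum]
      intro k _
      exact (hind_integrable r _).mul_const _
    rw [this, hμZdef, Bpoly]
    apply Finset.sum_congr rfl
    intro k _
    rw [integral_mul_const, hind_int]
  -- variance bound
  have hvarZ : ∀ r, ∫ ω, (Z r ω - μZ)^2 ∂P ≤ σ2 + σ2 / l^2 := by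
    intro r
    have hptwise : ∀ ω, (Z r ω - μZ)^2 ≤ ∑ k ∈ Finset.range (m + 1),
        bern m k x * ((if X r ω ≤ (k:ℝ)/m then (1:ℝ) else 0) - F ((k:ℝ)/m))^2 := by
      intro ω
      have hdiff : Z r ω - μZ = ∑ k ∈ Finset.range (m + 1),
          bern m k x * ((if X r ω ≤ (k:ℝ)/m then (1:ℝ) else 0) - F ((k:ℝ)/m)) := by
        rw [hZdef, hμZdef]
        simp only [Bpoly, hgdef]
        rw [← Finset.sum_sub_distrib]
        apply Finset.sum_congr rfl
        intro k _
        ring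
      rw [hdiff]
      set u : ℕ → ℝ := fun k => (if X r ω ≤ (k:ℝ)/m then (1:ℝ) else 0) - F ((k:ℝ)/m) with hudef
      calc (∑ k ∈ Finset.range (m+1), bern m k x * u k)^2
          = (∑ k ∈ Finset.range (m+1),
              Real.sqrt (bern m k x) * (Real.sqrt (bern m k x) * u k))^2 := by
            congr 1
            apply Finset.sum_congr rfl
            intro k _
            rw [← mul_assoc, Real.mul_self_sqrt (hbern_nonneg k)]
        _ ≤ (∑ k ∈ Finset.range (m+1), Real.sqrt (bern m k x)^2) *
              ∑ k ∈ Finset.range (m+1), (Real.sqrt (bern m k x) * u k)^2 :=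
            Finset.sum_mul_sq_le_sq_mul_sq _ _ _
        _ = ∑ k ∈ Finset.range (m+1), bern m k x * u k^2 := by
            have h1 : ∑ k ∈ Finset.range (m+1), Real.sqrt (bern m k x)^2 = 1 := by
              rw [← hbern_sum]
              apply Finset.sum_congr rfl
              intro k _
              exact Real.sq_sqrt (hbern_nonneg k)
            rw [h1, one_mul]
            apply Finset.sum_congr rfl
            intro k _
            rw [mul_pow, Real.sq_sqrt (hbern_nonneg k)]
    have hint2 : ∀ (c : ℝ), ∫ ω, ((if X r ω ≤ c then (1:ℝ) else 0) - F c)^2 ∂P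
        = F c * (1 - F c) := by
      intro c
      have hexp : ∀ ω, ((if X r ω ≤ c then (1:ℝ) else 0) - F c)^2
          = (if X r ω ≤ c then (1:ℝ) else 0) * (1 - 2 * F c) + (F c)^2 := by
        intro ω
        split <;> ring
      rw [show (fun ω => ((if X r ω ≤ c then (1:ℝ) else 0) - F c)^2) = (fun ω =>
          (if X r ω ≤ c then (1:ℝ) else 0) * (1 - 2 * F c) + (F c)^2) from funext hexp]
      rw [integral_add ((hind_integrable r c).mul_const _) (integrable_const _),
        integral_mul_const, hind_int r c]
      simp
      ring
    have hintsum : ∫ ω, (∑ k ∈ Finset.range (m + 1),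
        bern m k x * ((if X r ω ≤ (k:ℝ)/m then (1:ℝ) else 0) - F ((k:ℝ)/m))^2) ∂P
        = ∑ k ∈ Finset.range (m + 1), bern m k x * (F ((k:ℝ)/m) * (1 - F ((k:ℝ)/m))) := by
      rw [integral_finset_sum]
      · apply Finset.sum_congr rfl
        intro k _
        rw [integral_const_mul, hint2]
      · intro k _
        apply Integrable.const_mul
        refine integrable_of_bdd ?_ 1 (fun ω => ?_)
        · apply Measurable.pow_const
          exact (measurable_const.ite ((hmeas r) measurableSet_Iic) measurable_const).sub
            measurable_const
        · rw [abs_of_nonneg (sq_nonneg _)]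
          have h01 : (0:ℝ) ≤ F ((k:ℝ)/m) ∧ F ((k:ℝ)/m) ≤ 1 := by
            constructor
            · rw [← hcdf r ((k:ℝ)/m)]; exact ENNReal.toReal_nonneg
            · rw [← hcdf r ((k:ℝ)/m)]
              exact ENNReal.toReal_le_of_le_ofReal zero_le_one (by
                simpa using prob_le_one)
          split <;> nlinarith [h01.1, h01.2]
    have hsqint : Integrable (fun ω => (Z r ω - μZ)^2) P := by
      refine integrable_of_bdd (by measurability) 4 (fun ω => ?_)
      have h1 := (hZbd r ω).1; have h2 := (hZbd r ω).2
      have hμ01 : 0 ≤ μZ ∧ μZ ≤ 1 := by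
        rw [← hmean r]
        constructor
        · exact integral_nonneg (fun ω => (hZbd r ω).1)
        · have step : ∫ ω, Z r ω ∂P ≤ ∫ _, (1:ℝ) ∂P := by
            apply integral_mono _ (integrable_const 1) (fun ω => (hZbd r ω).2)
            exact integrable_of_bdd (hZmeas r) 1 (fun ω => abs_le.mpr
                ⟨(by linarith [(hZbd r ω).1]), (hZbd r ω).2⟩)
          simpa using step
      rw [abs_of_nonneg (sq_nonneg _)]
      nlinarith [hμ01.1, hμ01.2]
    have hmono : ∫ ω, (Z r ω - μZ)^2 ∂P ≤ Bpoly m (fun y => F y * (1 - F y)) x := by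
      have hBpeq : Bpoly m (fun y => F y * (1 - F y)) x = ∑ k ∈ Finset.range (m + 1),
          bern m k x * (F ((k:ℝ)/m) * (1 - F ((k:ℝ)/m))) := by
        rw [Bpoly]
        apply Finset.sum_congr rfl
        intro k _
        ring
      rw [hBpeq, ← hintsum]
      apply integral_mono hsqint _ hptwise
      refine integrable_of_bdd ?_ (∑ k ∈ Finset.range (m+1), bern m k x * 4) (fun ω => ?_)
      · apply Finset.measurable_sum
        intro k _
        apply Measurable.const_mul
        apply Measurable.pow_const
        exact (measurable_const.ite ((hmeas r) measurableSet_Iic) measurable_const).sub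
          measurable_const
      · rw [abs_of_nonneg (Finset.sum_nonneg (fun k _ =>
          mul_nonneg (hbern_nonneg k) (sq_nonneg _)))]
        apply Finset.sum_le_sum
        intro k _
        apply mul_le_mul_of_nonneg_left _ (hbern_nonneg k)
        have h01 : (0:ℝ) ≤ F ((k:ℝ)/m) ∧ F ((k:ℝ)/m) ≤ 1 := by
          constructor
          · rw [← hcdf r ((k:ℝ)/m)]; exact ENNReal.toReal_nonneg
          · rw [← hcdf r ((k:ℝ)/m)]
            exact ENNReal.toReal_le_of_le_ofReal zero_le_one (by simpa using prob_le_one)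
        split <;> nlinarith [h01.1, h01.2]
    refine hmono.trans ?_
    have := (abs_le.mp hvar).2
    linarith
  -- arithmetic quantities
  have hZint : ∀ r, Integrable (Z r) P := fun r =>
    integrable_of_bdd (hZmeas r) 1 (fun ω => abs_le.mpr
      ⟨(by linarith [(hZbd r ω).1]), (hZbd r ω).2⟩)
  have hnpos : (0:ℝ) < n := by positivity
  set s : ℝ := Real.sqrt σ2 with hsdef
  set rn : ℝ := Real.sqrt (n:ℝ) with hrndef
  have hs : 0 < s := Real.sqrt_pos.mpr hσ2
  have hrn : 0 < rn := Real.sqrt_pos.mpr hnpos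
  have hs2 : s^2 = σ2 := Real.sq_sqrt hσ2.le
  have hrn2 : rn^2 = (n:ℝ) := Real.sq_sqrt hnpos.le
  set ε' : ℝ := (l + 1/l) * s / rn with hεdef
  have hε : 0 < ε' := by positivity
  set vbar : ℝ := σ2 + σ2 / l^2 with hvdef
  have hvbar : 0 < vbar := by positivity
  set t : ℝ := 2 * ε' / (3 * vbar) with htdef
  have ht0 : 0 < t := by positivity
  have hrn_ge : l / s ≤ rn := by
    have h1 : (l/s)^2 ≤ rn^2 := by
      rw [hrn2, div_pow, hs2]
      exact hnbig
    nlinarith [div_pos hl hs]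
  have hεv : ε' ≤ vbar := by
    have key : (l + 1/l) * s / rn ≤ (l + 1/l) * s / (l/s) :=
      div_le_div_of_nonneg_left (by positivity) (div_pos hl hs) hrn_ge
    have heq : (l + 1/l) * s / (l/s) = vbar := by
      rw [hvdef, ← hs2]
      field_simp
    rw [hεdef]
    linarith
  have ht1 : t ≤ 1 := by
    rw [htdef, div_le_one (by positivity)]
    linarith
  have hexp_eq : (n:ℝ) * ((3/4) * t^2 * vbar - t * ε') = -(L + 2/3) := by
    have h2 : (n:ℝ) * ((3/4) * t^2 * vbar - t * ε') = -(l^2+1)/3 := by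
      rw [htdef, hεdef, hvdef, ← hrn2, ← hs2]
      field_simp
      ring
    rw [h2]
    rw [hl2]
    ring
  -- the complementary variables
  set W : Fin n → Ω → ℝ := fun r ω => 1 - Z r ω with hWdef
  have hWmeas : ∀ r, Measurable (W r) := fun r => (measurable_const.sub (hZmeas r))
  have hWindep : iIndepFun W P := by
    have := hindep.comp (fun _ => fun y => 1 - g y)
      (fun _ => measurable_const.sub hgmeas)
    exact this
  have hWbd : ∀ r ω, W r ω ∈ Set.Icc (0:ℝ) 1 := fun r ω =>
    ⟨(by simp only [hWdef]; linarith [(hZbd r ω).2]),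
     (by simp only [hWdef]; linarith [(hZbd r ω).1])⟩
  have hWmean : ∀ r, ∫ ω, W r ω ∂P = 1 - μZ := by
    intro r
    simp only [hWdef]
    rw [integral_sub (integrable_const 1) (hZint r), hmean r]
    simp
  have hWvar : ∀ r, ∫ ω, (W r ω - (1 - μZ))^2 ∂P ≤ vbar := by
    intro r
    have : (fun ω => (W r ω - (1 - μZ))^2) = (fun ω => (Z r ω - μZ)^2) := by
      funext ω
      simp only [hWdef]
      ring
    rw [this]
    exact hvarZ r
  -- Chernoff bounds on both tails
  have hA := chernoff_tail P n Z hZmeas hZindep hZbd μZ vbar t ε' hmean hvarZ ht0.le ht1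
  have hB := chernoff_tail P n W hWmeas hWindep hWbd (1 - μZ) vbar t ε' hWmean hWvar ht0.le ht1
  rw [hexp_eq] at hA hB
  -- rewriting BY as an average
  have hBYsum : ∀ ω, BY m n X ω x = (1/n : ℝ) * ∑ r, Z r ω := by
    intro ω
    show ∑ k ∈ Finset.range (m + 1), empY n X ((k : ℝ) / m) ω * bern m k x = _
    simp only [empY]
    calc ∑ k ∈ Finset.range (m + 1),
          ((1/n : ℝ) * ∑ r, (if X r ω ≤ (k:ℝ)/m then (1:ℝ) else 0)) * bern m k x
        = (1/n : ℝ) * ∑ k ∈ Finset.range (m + 1),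
            ∑ r, (if X r ω ≤ (k:ℝ)/m then (1:ℝ) else 0) * bern m k x := by
          rw [Finset.mul_sum]
          apply Finset.sum_congr rfl
          intro k _
          rw [mul_assoc, Finset.sum_mul]
      _ = (1/n : ℝ) * ∑ r, ∑ k ∈ Finset.range (m + 1),
            (if X r ω ≤ (k:ℝ)/m then (1:ℝ) else 0) * bern m k x := by
          rw [Finset.sum_comm]
      _ = (1/n : ℝ) * ∑ r, Z r ω := rfl
  -- event inclusion
  have hsub : {ω | |BY m n X ω x - F x| ≥ (2 * l + 1 / l) * s / rn} ⊆
      {ω | (n:ℝ) * (μZ + ε') ≤ ∑ r, Z r ω} ∪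
      {ω | (n:ℝ) * ((1 - μZ) + ε') ≤ ∑ r, W r ω} := by
    intro ω hω
    simp only [Set.mem_setOf_eq, ge_iff_le] at hω
    have hdev : ε' ≤ |BY m n X ω x - μZ| := by
      have htri : |BY m n X ω x - F x| ≤ |BY m n X ω x - μZ| + |μZ - F x| :=
        abs_sub_le _ _ _
      have hb2 : |μZ - F x| ≤ s * l / rn := hbias
      have hD : (2 * l + 1/l) * s / rn - s * l / rn = ε' := by
        rw [hεdef]
        ring
      linarith
    have hsumZ : ∑ r, Z r ω = (n:ℝ) * BY m n X ω x := by
      rw [hBYsum ω, ← mul_assoc]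
      field_simp
    have hsumW : ∑ r, W r ω = (n:ℝ) - ∑ r, Z r ω := by
      simp only [hWdef]
      rw [Finset.sum_sub_distrib]
      simp [Finset.card_univ]
    rcases abs_cases (BY m n X ω x - μZ) with ⟨habs, hsgn⟩ | ⟨habs, hsgn⟩
    · left
      simp only [Set.mem_setOf_eq]
      rw [hsumZ]
      rw [habs] at hdev
      nlinarith
    · right
      simp only [Set.mem_setOf_eq]
      rw [hsumW, hsumZ]
      rw [habs] at hdev
      nlinarith
  -- putting it together
  have hexpL : Real.exp (-L) = α / 2 := by
    rw [hLdef, Real.exp_neg, Real.exp_log (by positivity), inv_div]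
  calc P {ω | |BY m n X ω x - F x| ≥ (2 * l + 1 / l) * s / rn}
      ≤ P ({ω | (n:ℝ) * (μZ + ε') ≤ ∑ r, Z r ω} ∪
          {ω | (n:ℝ) * ((1 - μZ) + ε') ≤ ∑ r, W r ω}) := measure_mono hsub
    _ ≤ P {ω | (n:ℝ) * (μZ + ε') ≤ ∑ r, Z r ω} +
        P {ω | (n:ℝ) * ((1 - μZ) + ε') ≤ ∑ r, W r ω} := measure_union_le _ _
    _ ≤ ENNReal.ofReal (Real.exp (-(L + 2/3))) + ENNReal.ofReal (Real.exp (-(L + 2/3))) :=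
        add_le_add hA hB
    _ = ENNReal.ofReal (2 * Real.exp (-(L + 2/3))) := by
        rw [← ENNReal.ofReal_add (Real.exp_pos _).le (Real.exp_pos _).le]
        congr 1
        ring
    _ ≤ ENNReal.ofReal α := by
        apply ENNReal.ofReal_le_ofReal
        have h1 : Real.exp (-(L + 2/3)) = Real.exp (-L) * Real.exp (-(2/3:ℝ)) := by
          rw [← Real.exp_add]
          congr 1
          ring
        rw [h1, hexpL]
        have h2 : Real.exp (-(2/3:ℝ)) ≤ 1 := Real.exp_le_one_iff.mpr (by norm_num)
        nlinarith [Real.exp_pos (-(2/3:ℝ))]
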